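/- Let G be a finite simple graph and k ≥ 2 an integer with |E(G)| > k(k−1)/2. Construct the graph H with vertex set {s} ∪ D ∪ V(G) ∪ J, where D = {d_{i,j} : 1 ≤ i ≤ k−1, 1 ≤ j ≤ k} and J = {J_{uv} : uv ∈ E(G)}, and with edges: all edges of G; u J_{uv} and v J_{uv} for every edge uv ∈ E(G); s d_{1,j} for every j; d_{i,j} d_{i+1,j′} for all 1 ≤ i ≤ k−2 and all j, j′; and d_{k−1,j} w for every j and every w ∈ V(G). Then there exists a valid strategy for the firefighting process on (H, s) saving at least k + k(k−1)/2 + 1 vertices if and only if G contains a clique on k vertices. -/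

import Mathlib

open SimpleGraph

variable {V : Type*}

/-- The set of vertices burned by the end of time step `i` (0-indexed: `burnt G s S i` is `B_i`),
when a fire starts at `s` and the firefighter defends the vertices of the list `S` in order. -/
def burnt (G : SimpleGraph V) (s : V) (S : List V) : ℕ → Set V
  | 0 => {s}
  | i + 1 => burnt G s S i ∪
      {u | u ∉ S.take (i + 1) ∧ ∃ b ∈ burnt G s S i, G.Adj u b}

/-- The set of all vertices ever burned by the strategy `S`. -/
def BurntSet (G : SimpleGraph V) (s : V) (S : List V) : Set V := ⋃ i, burnt G s S i

/-- A strategy is a sequence of pairwise distinct vertices; it is valid if the vertex defended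
at each step is not yet burning at the start of that step. -/
def ValidStrategy (G : SimpleGraph V) (s : V) (S : List V) : Prop :=
  S.Nodup ∧ ∀ (i : ℕ) (h : i < S.length), S.get ⟨i, h⟩ ∉ burnt G s S i

/-- The number of vertices saved (i.e. not burned) by the strategy `S`. -/
noncomputable def sav (G : SimpleGraph V) (s : V) (S : List V) : ℕ := (BurntSet G s S)ᶜ.ncard

/-- A valid strategy is minimal if every proper subsequence of it which is itself a valid
strategy saves strictly fewer vertices. -/
def MinimalStrategy (G : SimpleGraph V) (s : V) (S : List V) : Prop :=
  ValidStrategy G s S ∧ ∀ S' : List V, S'.Sublist S → S' ≠ S → ValidStrategy G s S' →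
    sav G s S' < sav G s S

/-- A strategy is optimal if it is minimal and saves the maximum number of vertices. -/
def OptimalStrategy (G : SimpleGraph V) (s : V) (S : List V) : Prop :=
  MinimalStrategy G s S ∧ ∀ S' : List V, ValidStrategy G s S' → sav G s S' ≤ sav G s S

/-- A walk is an induced path if it is a path and the subgraph induced on its vertices has no
edges besides the edges of the path. -/
def IsInducedPath (G : SimpleGraph V) {a b : V} (p : G.Walk a b) : Prop :=
  p.IsPath ∧ ∀ x ∈ p.support, ∀ y ∈ p.support, G.Adj x y → p.toSubgraph.Adj x y

/-- `u` is reachable from `s` in the subgraph of `G` induced on the complement of `A`. -/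
def ReachAvoiding (G : SimpleGraph V) (A : Set V) (s u : V) : Prop :=
  ∃ p : G.Walk s u, ∀ x ∈ p.support, x ∉ A

/-- The vertex set of the graph `H` built from `G` and `k`: a source `s` (first summand),
the grid `D = {d_{i,j} : 1 ≤ i ≤ k-1, 1 ≤ j ≤ k}`, the vertices of `G`, and a vertex
`J_{uv}` for each edge `uv` of `G`. -/
abbrev FFVerts' (V : Type*) (G : SimpleGraph V) (k : ℕ) : Type _ :=
  Unit ⊕ (Fin (k - 1) × Fin k) ⊕ V ⊕ {e : Sym2 V // e ∈ G.edgeSet}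

/-- The base (asymmetric) edge relation of `H`: all edges of `G`; `u J_{uv}` and `v J_{uv}`
for every edge `uv` of `G`; `s d_{1,j}`; `d_{i,j} d_{i+1,j'}`; and `d_{k-1,j} w` for every
vertex `w` of `G`.  (Indices of `D` are 0-indexed, so `d_{1,j}` is level `0` and `d_{k-1,j}`
is level `k - 2`.) -/
def ffRel' (V : Type*) (G : SimpleGraph V) (k : ℕ) :
    FFVerts' V G k → FFVerts' V G k → Prop := fun a b =>
  match a, b with
  | Sum.inl _, Sum.inr (Sum.inl d) => (d.1 : ℕ) = 0
  | Sum.inr (Sum.inl d), Sum.inr (Sum.inl d') => (d'.1 : ℕ) = (d.1 : ℕ) + 1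
  | Sum.inr (Sum.inl d), Sum.inr (Sum.inr (Sum.inl _)) => (d.1 : ℕ) = k - 2
  | Sum.inr (Sum.inr (Sum.inl u)), Sum.inr (Sum.inr (Sum.inl v)) => G.Adj u v
  | Sum.inr (Sum.inr (Sum.inl v)), Sum.inr (Sum.inr (Sum.inr e)) => v ∈ (e : Sym2 V)
  | _, _ => False

/-- The graph `H` of the reduction of STATEMENT 18. -/
def FFGraph' (V : Type*) (G : SimpleGraph V) (k : ℕ) : SimpleGraph (FFVerts' V G k) :=
  SimpleGraph.fromRel (ffRel' V G k)


-- ## generic burnt lemmas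

lemma burnt_succ (G : SimpleGraph V) (s : V) (S : List V) (i : ℕ) :
    burnt G s S (i+1) = burnt G s S i ∪
      {u | u ∉ S.take (i + 1) ∧ ∃ b ∈ burnt G s S i, G.Adj u b} := rfl

lemma burnt_mono (G : SimpleGraph V) (s : V) (S : List V) :
    Monotone (burnt G s S) := by
  refine monotone_nat_of_le_succ fun i => ?_
  rw [burnt_succ]; exact Set.subset_union_left

lemma source_burnt (G : SimpleGraph V) (s : V) (S : List V) (i : ℕ) :
    s ∈ burnt G s S i :=
  burnt_mono G s S (Nat.zero_le i) rfl

lemma mem_take_of_mem_take_le {α : Type*} {l : List α} {x : α} {m n : ℕ} (h : m ≤ n)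
    (hx : x ∈ l.take m) : x ∈ l.take n := by
  have : l.take m = (l.take n).take m := by rw [List.take_take, Nat.min_eq_left h]
  rw [this] at hx
  exact List.take_subset _ _ hx

lemma spread {G : SimpleGraph V} {s : V} {S : List V} {i : ℕ} {u b : V}
    (hb : b ∈ burnt G s S i) (hadj : G.Adj u b) (hu : u ∉ S.take (i+1)) :
    u ∈ burnt G s S (i+1) := by
  rw [burnt_succ]; exact Or.inr ⟨hu, b, hb, hadj⟩

lemma burnt_subset_of_closed {G : SimpleGraph V} {s : V} {S : List V} (X : ℕ → Set V)
    (hs : s ∈ X 0) (hmono : ∀ i, X i ⊆ X (i+1))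
    (hcl : ∀ i u b, b ∈ X i → G.Adj u b → u ∈ S.take (i+1) ∨ u ∈ X (i+1)) :
    ∀ i, burnt G s S i ⊆ X i := by
  intro i
  induction i with
  | zero => intro x hx; cases hx; exact hs
  | succ i ih =>
      rw [burnt_succ]
      rintro x (hx | ⟨hnx, b, hb, hadj⟩)
      · exact hmono i (ih hx)
      · rcases hcl i x b (ih hb) hadj with h | h
        · exact absurd h hnx
        · exact h

lemma defended_not_burnt {G : SimpleGraph V} {s : V} {S : List V}
    (hS : ValidStrategy G s S) {i : ℕ} (hi : i < S.length) :
    S.get ⟨i, hi⟩ ∉ BurntSet G s S := by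
  intro hx
  rw [BurntSet, Set.mem_iUnion] at hx
  obtain ⟨m, hm⟩ := hx
  set v := S.get ⟨i, hi⟩ with hv
  have key : ∀ j, v ∉ burnt G s S (i + j) := by
    intro j
    induction j with
    | zero => exact hS.2 i hi
    | succ j ih =>
        rw [show i + (j+1) = (i+j)+1 from rfl, burnt_succ]
        rintro (h | ⟨hn, _⟩)
        · exact ih h
        · refine hn (mem_take_of_mem_take_le (show i+1 ≤ i+j+1 by omega) ?_)
          rw [List.mem_take_iff_getElem]
          refine ⟨i, by simp; omega, by simp [hv]⟩
  rcases le_or_gt m i with h | h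
  · exact hS.2 i hi (burnt_mono G s S h hm)
  · exact key (m - i) (by rwa [Nat.add_sub_cancel' h.le])

-- ## graph-specific infrastructure

variable {G : SimpleGraph V} {k : ℕ}

abbrev svx : FFVerts' V G k := Sum.inl ()
abbrev dvx (d : Fin (k-1) × Fin k) : FFVerts' V G k := Sum.inr (Sum.inl d)
abbrev gvx (v : V) : FFVerts' V G k := Sum.inr (Sum.inr (Sum.inl v))
abbrev jvx (e : {e : Sym2 V // e ∈ G.edgeSet}) : FFVerts' V G k := Sum.inr (Sum.inr (Sum.inr e))

lemma adj_sd {d : Fin (k-1) × Fin k} (h : (d.1:ℕ) = 0) :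
    (FFGraph' V G k).Adj svx (dvx d) := by
  simp [FFGraph', fromRel_adj, ffRel', h]

lemma adj_dd {d d' : Fin (k-1) × Fin k} (h : (d'.1:ℕ) = (d.1:ℕ)+1) :
    (FFGraph' V G k).Adj (dvx d) (dvx d') := by
  simp only [FFGraph', fromRel_adj, ffRel']
  refine ⟨?_, Or.inl h⟩
  intro he
  have : d.1 = d'.1 := congrArg (fun x => x.elim (fun _ => d.1) (Sum.elim Prod.fst (fun _ => d.1))) he
  omega

lemma adj_dg {d : Fin (k-1) × Fin k} {w : V} (h : (d.1:ℕ) = k-2) :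
    (FFGraph' V G k).Adj (dvx d) (gvx w) := by
  simp [FFGraph', fromRel_adj, ffRel', h]

lemma adj_gg {u v : V} (h : G.Adj u v) : (FFGraph' V G k).Adj (gvx u) (gvx v) := by
  simp [FFGraph', fromRel_adj, ffRel', h, h.symm, h.ne]

lemma adj_gj {v : V} {e : {e : Sym2 V // e ∈ G.edgeSet}} (h : v ∈ (e : Sym2 V)) :
    (FFGraph' V G k).Adj (gvx v) (jvx e) := by
  simp [FFGraph', fromRel_adj, ffRel', h]

lemma gvx_injective : Function.Injective (gvx (V := V) (G := G) (k := k)) :=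
  fun a b h => by simpa using h

lemma jvx_injective : Function.Injective (jvx (V := V) (G := G) (k := k)) :=
  fun a b h => by simpa using h

-- ## pigeonhole and burning lemmas for an arbitrary strategy

lemma pigeonhole_row (S : List (FFVerts' V G k)) {i : ℕ} (hi : i < k - 1) {m : ℕ} (hm : m < k) :
    ∃ j : Fin k, dvx (⟨i, hi⟩, j) ∉ S.take m := by
  classical
  by_contra h
  push_neg at h
  have hsub : (Finset.univ.image fun j : Fin k => dvx (G := G) (⟨i, hi⟩, j)) ⊆
      (S.take m).toFinset := by
    intro x hx
    simp only [Finset.mem_image, Finset.mem_univ, true_and] at hx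
    obtain ⟨j, rfl⟩ := hx
    exact List.mem_toFinset.2 (h j)
  have hcard : (Finset.univ.image fun j : Fin k => dvx (G := G) (⟨i, hi⟩, j)).card = k := by
    rw [Finset.card_image_of_injective _ (fun a b hab => by simpa using hab)]
    simp
  have h1 := Finset.card_le_card hsub
  have h2 := List.toFinset_card_le (S.take m)
  have h3 : (S.take m).length = min m S.length := List.length_take
  omega

lemma row_burnt (hk : 2 ≤ k) (S : List (FFVerts' V G k)) :
    ∀ i : ℕ, i ≤ k - 2 → ∃ d : Fin (k-1) × Fin k, (d.1:ℕ) = i ∧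
      dvx d ∈ burnt (FFGraph' V G k) svx S (i+1) := by
  intro i
  induction i with
  | zero =>
      intro _
      obtain ⟨j, hj⟩ := pigeonhole_row (G := G) S (show 0 < k - 1 by omega) (show 1 < k by omega)
      exact ⟨_, rfl, spread (source_burnt _ _ _ 0) (adj_sd rfl).symm hj⟩
  | succ i ih =>
      intro hik
      obtain ⟨d, hd1, hd2⟩ := ih (by omega)
      obtain ⟨j, hj⟩ := pigeonhole_row (G := G) S (show i+1 < k - 1 by omega)
        (show i+2 < k by omega)
      refine ⟨_, rfl, spread hd2 (adj_dd (by simp [hd1])).symm hj⟩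

lemma gvx_burnt (hk : 2 ≤ k) (S : List (FFVerts' V G k)) (w : V)
    (hw : gvx w ∉ S.take k) : gvx w ∈ burnt (FFGraph' V G k) svx S k := by
  obtain ⟨d, hd1, hd2⟩ := row_burnt hk S (k-2) le_rfl
  have h1 : k - 2 + 1 = k - 1 := by omega
  have h2 : k - 1 + 1 = k := by omega
  rw [h1] at hd2
  have := spread hd2 (adj_dg (w := w) hd1).symm (by rw [h2]; exact hw)
  rwa [h2] at this

lemma jvx_burnt (hk : 2 ≤ k) (S : List (FFVerts' V G k)) (e : {e : Sym2 V // e ∈ G.edgeSet})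
    (w : V) (hw : w ∈ (e : Sym2 V)) (hw2 : gvx w ∉ S.take k)
    (he : jvx e ∉ S.take (k+1)) : jvx e ∈ burnt (FFGraph' V G k) svx S (k+1) :=
  spread (gvx_burnt hk S w hw2) (adj_gj hw).symm he

lemma dvx_burnt (hk : 2 ≤ k) (S : List (FFVerts' V G k)) (d : Fin (k-1) × Fin k)
    (hd : dvx d ∉ S.take ((d.1:ℕ)+1)) :
    dvx d ∈ burnt (FFGraph' V G k) svx S ((d.1:ℕ)+1) := by
  rcases Nat.eq_zero_or_pos (d.1:ℕ) with h0 | hpos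
  · rw [h0] at hd ⊢
    exact spread (source_burnt _ _ _ 0) (adj_sd h0).symm hd
  · obtain ⟨d', hd1, hd2⟩ := row_burnt hk S ((d.1:ℕ) - 1) (by have := d.1.2; omega)
    have h1 : (d.1:ℕ) - 1 + 1 = (d.1:ℕ) := by omega
    rw [h1] at hd2
    exact spread hd2 (adj_dd (by omega)).symm hd

-- ## finiteness
lemma ffverts_finite [Finite V] : Finite (FFVerts' V G k) := by
  classical
  cases nonempty_fintype V
  infer_instance

-- ## hard direction
lemma strategy_to_clique [Fintype V] {G : SimpleGraph V} {k : ℕ} (hk : 2 ≤ k)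
    (S : List (FFVerts' V G k))
    (hno : ¬ ∃ K : Finset V, K.card = k ∧ (↑K : Set V).Pairwise G.Adj) :
    sav (FFGraph' V G k) svx S ≤ k + k * (k-1) / 2 := by
  classical
  have hfin : Finite (FFVerts' V G k) := ffverts_finite
  letI : DecidableEq (FFVerts' V G k) := Classical.decEq _
  letI : DecidablePred (fun v : V => gvx (G := G) (k := k) v ∈ S.take k) :=
    fun _ => Classical.propDecidable _
  set H := FFGraph' V G k with hH
  set A : Finset V := Finset.univ.filter (fun v => gvx (G := G) (k := k) v ∈ S.take k) with hA
  set Ein : Set {e : Sym2 V // e ∈ G.edgeSet} := {e | ∀ w ∈ (e : Sym2 V), w ∈ A} with hEin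
  have hmemA : ∀ v, v ∈ A ↔ gvx (G := G) (k := k) v ∈ S.take k := by
    intro v; simp [hA]
  -- saved vertices are defended or J-vertices inside A
  have hsub : (BurntSet H svx S)ᶜ ⊆ {x | x ∈ S.take (k+1)} ∪ (jvx '' Ein) := by
    rintro x hx
    have hxb : x ∉ BurntSet H svx S := hx
    have hburn : ∀ m, x ∈ burnt H svx S m → False := fun m hm =>
      hxb (Set.mem_iUnion.2 ⟨m, hm⟩)
    rcases x with u | ⟨d | ⟨w | e⟩⟩
    · exact absurd (hburn 0 rfl) (by simp)
    · rcases Classical.em (dvx d ∈ S.take ((d.1:ℕ)+1)) with hmem | hmem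
      · exact Or.inl (mem_take_of_mem_take_le (by have := d.1.2; omega) hmem)
      · exact absurd (hburn _ (dvx_burnt hk S d hmem)) (by simp)
    · rcases Classical.em (gvx w ∈ S.take k) with hmem | hmem
      · exact Or.inl (mem_take_of_mem_take_le (by omega) hmem)
      · exact absurd (hburn _ (gvx_burnt hk S w hmem)) (by simp)
    · rcases Classical.em (jvx e ∈ S.take (k+1)) with hmem | hmem
      · exact Or.inl hmem
      · refine Or.inr ⟨e, ?_, rfl⟩
        intro w hw
        rw [hmemA]
        by_contra hgw
        exact hburn _ (jvx_burnt hk S e w hw hgw hmem)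
  -- counting
  have hTS : ({x | x ∈ S.take (k+1)} : Set (FFVerts' V G k)).ncard ≤ k + 1 := by
    have h1 : ({x | x ∈ S.take (k+1)} : Set (FFVerts' V G k)) =
        ((S.take (k+1)).toFinset : Set (FFVerts' V G k)) := by
      ext x; simp
    rw [h1, Set.ncard_coe_finset]
    have h2 := List.toFinset_card_le (S.take (k+1))
    have h3 : (S.take (k+1)).length = min (k+1) S.length := List.length_take
    omega
  have hAcard : A.card ≤ k := by
    have hinj : Set.InjOn (gvx (G := G) (k := k)) ↑A := fun a _ b _ h => gvx_injective h
    have := Finset.card_le_card_of_injOn (gvx (G := G) (k := k))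
      (fun v hv => List.mem_toFinset.2 ((hmemA v).1 hv)) hinj
    have h2 := List.toFinset_card_le (S.take k)
    have h3 : (S.take k).length = min k S.length := List.length_take
    omega
  have hEinSub : Subtype.val '' Ein ⊆ ↑(A.offDiag.image (Function.uncurry Sym2.mk)) := by
    rintro x ⟨⟨e, hedge⟩, he, rfl⟩
    induction e using Sym2.ind with
    | _ a b =>
      rw [SimpleGraph.mem_edgeSet] at hedge
      simp only [hEin, Set.mem_setOf_eq] at he
      exact Finset.mem_coe.2 (Finset.mem_image.2 ⟨(a, b),
        Finset.mem_offDiag.2 ⟨he a (Sym2.mem_mk_left a b), he b (Sym2.mem_mk_right a b),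
          hedge.ne⟩, rfl⟩)
  have hEinCard : (Subtype.val '' Ein).ncard ≤ Nat.choose k 2 - 1 := by
    by_cases hAk : A.card = k
    · have hnc : ¬ (↑A : Set V).Pairwise G.Adj := fun hp => hno ⟨A, hAk, hp⟩
      simp only [Set.Pairwise, not_forall] at hnc
      obtain ⟨a, ha, b, hb, hab, hnadj⟩ := hnc
      have hmemab : Sym2.mk a b ∈ A.offDiag.image (Function.uncurry Sym2.mk) :=
        Finset.mem_image.2 ⟨(a, b), Finset.mem_offDiag.2 ⟨ha, hb, hab⟩, rfl⟩
      have hsub2 : Subtype.val '' Ein ⊆ ↑((A.offDiag.image (Function.uncurry Sym2.mk)).erase (Sym2.mk a b)) := by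
        rintro x ⟨⟨e, hedge⟩, he, rfl⟩
        refine Finset.mem_coe.2 (Finset.mem_erase.2 ⟨?_, hEinSub ⟨⟨e, hedge⟩, he, rfl⟩⟩)
        intro hcontra
        have heq : e = Sym2.mk a b := hcontra
        rw [heq, SimpleGraph.mem_edgeSet] at hedge
        exact hnadj hedge
      calc (Subtype.val '' Ein).ncard ≤ ((A.offDiag.image (Function.uncurry Sym2.mk)).erase (Sym2.mk a b)).card := by
            rw [← Set.ncard_coe_finset]
            exact Set.ncard_le_ncard hsub2 (Set.toFinite _)
        _ = Nat.choose k 2 - 1 := by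
            rw [Finset.card_erase_of_mem hmemab, Sym2.card_image_offDiag, hAk]
    · have h1 : (Subtype.val '' Ein).ncard ≤ Nat.choose (A.card) 2 := by
        rw [← Sym2.card_image_offDiag, ← Set.ncard_coe_finset]
        exact Set.ncard_le_ncard hEinSub (Set.toFinite _)
      have h2 : Nat.choose (A.card) 2 ≤ Nat.choose (k-1) 2 :=
        Nat.choose_le_choose 2 (by omega)
      have h3 : Nat.choose k 2 = (k-1) + Nat.choose (k-1) 2 := by
        conv_lhs => rw [show k = (k-1)+1 by omega]
        rw [Nat.choose_succ_succ, Nat.choose_one_right]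
      omega
  have hjEin : (jvx (k := k) '' Ein).ncard = (Subtype.val '' Ein).ncard := by
    rw [Set.ncard_image_of_injective _ jvx_injective,
      Set.ncard_image_of_injective _ Subtype.val_injective]
  have hchoose_pos : 0 < Nat.choose k 2 := Nat.choose_pos hk
  have hfin2 : ({x | x ∈ S.take (k+1)} ∪ (jvx (k := k) '' Ein) : Set (FFVerts' V G k)).Finite :=
    Set.toFinite _
  have hmain : sav H svx S ≤ ({x | x ∈ S.take (k+1)} : Set (FFVerts' V G k)).ncard
      + (jvx (k := k) '' Ein).ncard := by
    calc sav H svx S ≤ ({x | x ∈ S.take (k+1)} ∪ (jvx (k := k) '' Ein) :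
          Set (FFVerts' V G k)).ncard :=
          Set.ncard_le_ncard hsub hfin2
      _ ≤ _ := Set.ncard_union_le _ _
  have hct : Nat.choose k 2 = k * (k-1) / 2 := Nat.choose_two_right k
  omega

-- ## the invariant set for the explicit clique strategy

def XSet (G : SimpleGraph V) (k : ℕ) (K : Finset V) (e0 : {e : Sym2 V // e ∈ G.edgeSet})
    (i : ℕ) : Set (FFVerts' V G k) := fun x =>
  match x with
  | Sum.inl _ => True
  | Sum.inr (Sum.inl d) => (d.1 : ℕ) < i
  | Sum.inr (Sum.inr (Sum.inl w)) => w ∉ K ∧ k ≤ i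
  | Sum.inr (Sum.inr (Sum.inr e)) => e ≠ e0 ∧ ¬(∀ w ∈ (e : Sym2 V), w ∈ K) ∧ k + 1 ≤ i

variable {K : Finset V} {e0 : {e : Sym2 V // e ∈ G.edgeSet}} {i : ℕ}

lemma mem_XSet_s : svx ∈ XSet G k K e0 i := trivial

lemma mem_XSet_d {d : Fin (k-1) × Fin k} : dvx d ∈ XSet G k K e0 i ↔ (d.1:ℕ) < i := Iff.rfl

lemma mem_XSet_g {w : V} : gvx w ∈ XSet G k K e0 i ↔ w ∉ K ∧ k ≤ i := Iff.rfl

lemma mem_XSet_j {e : {e : Sym2 V // e ∈ G.edgeSet}} :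
    jvx e ∈ XSet G k K e0 i ↔ e ≠ e0 ∧ ¬(∀ w ∈ (e : Sym2 V), w ∈ K) ∧ k + 1 ≤ i := Iff.rfl

lemma XSet_mono (G : SimpleGraph V) (k : ℕ) (K : Finset V)
    (e0 : {e : Sym2 V // e ∈ G.edgeSet}) (i : ℕ) :
    XSet G k K e0 i ⊆ XSet G k K e0 (i+1) := by
  intro x hx
  rcases x with _ | ⟨d | ⟨w | e⟩⟩
  · exact mem_XSet_s
  · rw [mem_XSet_d] at hx ⊢; omega
  · rw [mem_XSet_g] at hx ⊢; exact ⟨hx.1, by omega⟩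
  · rw [mem_XSet_j] at hx ⊢; exact ⟨hx.1, hx.2.1, by omega⟩

lemma XSet_le_top (G : SimpleGraph V) (k : ℕ) (K : Finset V)
    (e0 : {e : Sym2 V // e ∈ G.edgeSet}) (i : ℕ) :
    XSet G k K e0 i ⊆ XSet G k K e0 (k+1) := by
  intro x hx
  rcases x with _ | ⟨d | ⟨w | e⟩⟩
  · exact mem_XSet_s
  · rw [mem_XSet_d] at hx ⊢; have := d.1.2; omega
  · rw [mem_XSet_g] at hx ⊢; exact ⟨hx.1, by omega⟩
  · rw [mem_XSet_j] at hx ⊢; exact ⟨hx.1, hx.2.1, by omega⟩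

lemma XSet_closed (hk : 2 ≤ k) (S : List (FFVerts' V G k))
    (hgK : ∀ v ∈ K, ∀ m, k ≤ m → gvx v ∈ S.take m)
    (hj : ∀ m, k+1 ≤ m → jvx e0 ∈ S.take m) :
    ∀ i u b, b ∈ XSet G k K e0 i → (FFGraph' V G k).Adj u b →
      u ∈ S.take (i+1) ∨ u ∈ XSet G k K e0 (i+1) := by
  intro i u b hb hadj
  rw [FFGraph', fromRel_adj] at hadj
  obtain ⟨hne, hrel⟩ := hadj
  rcases b with _ | ⟨d | ⟨w | e⟩⟩ <;> rcases u with _ | ⟨d' | ⟨w' | e'⟩⟩ <;>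
    simp only [ffRel'] at hrel
  -- b = s
  · exact absurd hrel (by simp)
  · refine Or.inr ?_
    rw [mem_XSet_d]
    rcases hrel with h | h
    · exact absurd h id
    · omega
  · exact absurd hrel (by simp)
  · exact absurd hrel (by simp)
  -- b = dvx d
  · exact Or.inr mem_XSet_s
  · rw [mem_XSet_d] at hb
    refine Or.inr ?_
    rw [mem_XSet_d]
    rcases hrel with h | h <;> omega
  · rw [mem_XSet_d] at hb
    rcases hrel with h | h
    · exact absurd h id
    · -- h : d.1 = k - 2, u = gvx w'
      by_cases hw' : w' ∈ K
      · exact Or.inl (hgK w' hw' (i+1) (by omega))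
      · exact Or.inr (mem_XSet_g.2 ⟨hw', by omega⟩)
  · exact absurd hrel (by simp)
  -- b = gvx w
  · exact Or.inr mem_XSet_s
  · rw [mem_XSet_g] at hb
    rcases hrel with h | h
    · -- h : d'.1 = k - 2
      exact Or.inr (mem_XSet_d.2 (by omega))
    · exact absurd h id
  · rw [mem_XSet_g] at hb
    by_cases hw' : w' ∈ K
    · exact Or.inl (hgK w' hw' (i+1) (by omega))
    · exact Or.inr (mem_XSet_g.2 ⟨hw', by omega⟩)
  · rw [mem_XSet_g] at hb
    rcases hrel with h | h
    · exact absurd h id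
    · -- h : w ∈ e'
      by_cases he' : e' = e0
      · subst he'
        exact Or.inl (hj (i+1) (by omega))
      · exact Or.inr (mem_XSet_j.2 ⟨he', fun hall => hb.1 (hall w h), by omega⟩)
  -- b = jvx e
  · exact Or.inr mem_XSet_s
  · exact absurd hrel (by simp)
  · rw [mem_XSet_j] at hb
    rcases hrel with h | h
    · -- h : w' ∈ e
      by_cases hw' : w' ∈ K
      · exact Or.inl (hgK w' hw' (i+1) (by omega))
      · exact Or.inr (mem_XSet_g.2 ⟨hw', by omega⟩)
    · exact absurd h id
  · exact absurd hrel (by simp)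

lemma clique_to_strategy [Fintype V] {G : SimpleGraph V} {k : ℕ} (hk : 2 ≤ k)
    (hE : k * (k - 1) / 2 < G.edgeSet.ncard)
    (K : Finset V) (hKcard : K.card = k) (hKcl : (↑K : Set V).Pairwise G.Adj) :
    ∃ S : List (FFVerts' V G k), ValidStrategy (FFGraph' V G k) svx S ∧
      k + k * (k - 1) / 2 + 1 ≤ sav (FFGraph' V G k) svx S := by
  classical
  have hfin : Finite (FFVerts' V G k) := ffverts_finite
  set EK : Finset (Sym2 V) := K.offDiag.image (Function.uncurry Sym2.mk) with hEK
  have hEKcard : EK.card = Nat.choose k 2 := by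
    rw [hEK, Sym2.card_image_offDiag, hKcard]
  have hEKedge : ∀ e ∈ EK, e ∈ G.edgeSet := by
    intro e he
    obtain ⟨⟨a, b⟩, hab, rfl⟩ := Finset.mem_image.1 he
    rw [Finset.mem_offDiag] at hab
    exact (SimpleGraph.mem_edgeSet G).2 (hKcl hab.1 hab.2.1 hab.2.2)
  -- an edge not inside the clique
  have hex : ∃ e ∈ G.edgeSet, e ∉ EK := by
    by_contra h
    push_neg at h
    have hsub : G.edgeSet ⊆ ↑EK := fun e he => Finset.mem_coe.2 (h e he)
    have := Set.ncard_le_ncard hsub (Set.toFinite _)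
    rw [Set.ncard_coe_finset, hEKcard, Nat.choose_two_right] at this
    omega
  obtain ⟨e0, he0, he0K⟩ := hex
  set e0' : {e : Sym2 V // e ∈ G.edgeSet} := ⟨e0, he0⟩ with he0'
  have hnotinK : ¬ ∀ w ∈ (e0' : Sym2 V), w ∈ K := by
    intro hall
    apply he0K
    induction e0 using Sym2.ind with
    | _ a b =>
      rw [SimpleGraph.mem_edgeSet] at he0
      exact Finset.mem_image.2 ⟨(a, b), Finset.mem_offDiag.2
        ⟨hall a (Sym2.mem_mk_left a b), hall b (Sym2.mem_mk_right a b), he0.ne⟩, rfl⟩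
  set S : List (FFVerts' V G k) := K.toList.map gvx ++ [jvx e0'] with hS
  have hlen1 : (K.toList.map (gvx (G := G) (k := k))).length = k := by
    simp [hKcard]
  have hlen : S.length = k + 1 := by simp [hS, hKcard]
  have htakek : S.take k = K.toList.map gvx := by
    rw [hS, List.take_left' hlen1]
  have hgK : ∀ v ∈ K, ∀ m, k ≤ m → gvx (G := G) (k := k) v ∈ S.take m := by
    intro v hv m hm
    refine mem_take_of_mem_take_le hm ?_
    rw [htakek]
    exact List.mem_map_of_mem (Finset.mem_toList.mpr hv)
  have hj : ∀ m, k+1 ≤ m → jvx e0' ∈ S.take m := by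
    intro m hm
    rw [List.take_of_length_le (by omega)]
    exact List.mem_append_right _ (List.mem_singleton.2 rfl)
  -- burnt sets are inside the invariant
  have hburnt : ∀ i, burnt (FFGraph' V G k) svx S i ⊆ XSet G k K e0' i :=
    burnt_subset_of_closed _ mem_XSet_s (XSet_mono G k K e0')
      (XSet_closed hk S hgK hj)
  have hBsub : BurntSet (FFGraph' V G k) svx S ⊆ XSet G k K e0' (k+1) := by
    intro x hx
    obtain ⟨i, hi⟩ := Set.mem_iUnion.1 hx
    exact XSet_le_top G k K e0' i (hburnt i hi)
  refine ⟨S, ⟨?_, ?_⟩, ?_⟩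
  · -- Nodup
    rw [hS, List.nodup_append]
    refine ⟨List.Nodup.map gvx_injective K.nodup_toList, List.nodup_singleton _, ?_⟩
    intro x hx y hx2 hxy
    rw [List.mem_singleton] at hx2
    subst hx2 hxy
    obtain ⟨v, _, hveq⟩ := List.mem_map.1 hx
    exact absurd hveq (by simp)
  · -- validity
    intro i hi
    rw [hlen] at hi
    intro hmem
    have hXi := hburnt i hmem
    rcases Nat.lt_or_ge i k with hik | hik
    · have hget : S.get ⟨i, by rw [hlen]; omega⟩ = gvx (K.toList.get ⟨i, by simp only [Finset.length_toList, hKcard]; omega⟩) := by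
        simp only [hS, List.get_eq_getElem]
        rw [List.getElem_append_left (by rw [hlen1]; omega)]
        simp
      rw [hget] at hXi
      rw [mem_XSet_g] at hXi
      omega
    · have hieq : i = k := by omega
      subst hieq
      have hget : S.get ⟨i, by omega⟩ = jvx e0' := by
        simp only [hS, List.get_eq_getElem]
        rw [List.getElem_append_right (by rw [hlen1]; try omega)]
        simp [hlen1]
      rw [hget] at hXi
      rw [mem_XSet_j] at hXi
      omega
  · -- saved count
    set Ecl : Set {e : Sym2 V // e ∈ G.edgeSet} :=
      insert e0' {e | ∀ w ∈ (e : Sym2 V), w ∈ K} with hEcl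
    have hFsub : (gvx '' ↑K ∪ jvx (k := k) '' Ecl) ⊆ (BurntSet (FFGraph' V G k) svx S)ᶜ := by
      rintro x (⟨v, hv, rfl⟩ | ⟨e, he, rfl⟩)
      · intro hxb
        have := hBsub hxb
        rw [mem_XSet_g] at this
        exact this.1 hv
      · intro hxb
        have hX := hBsub hxb
        rw [mem_XSet_j] at hX
        rcases he with rfl | he
        · exact hX.1 rfl
        · exact hX.2.1 he
    have hEclcard : Ecl.ncard = Nat.choose k 2 + 1 := by
      rw [hEcl, Set.ncard_insert_of_notMem (by exact fun h => hnotinK h) (Set.toFinite _)]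
      congr 1
      have hval : Subtype.val '' {e : {e : Sym2 V // e ∈ G.edgeSet} | ∀ w ∈ (e : Sym2 V), w ∈ K}
          = ↑EK := by
        ext e
        constructor
        · rintro ⟨⟨e, hedge⟩, he, rfl⟩
          induction e using Sym2.ind with
          | _ a b =>
            rw [SimpleGraph.mem_edgeSet] at hedge
            exact Finset.mem_coe.2 (Finset.mem_image.2 ⟨(a, b), Finset.mem_offDiag.2
              ⟨he a (Sym2.mem_mk_left a b), he b (Sym2.mem_mk_right a b), hedge.ne⟩, rfl⟩)
        · intro he
          refine ⟨⟨e, hEKedge e he⟩, ?_, rfl⟩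
          obtain ⟨⟨a, b⟩, hab, rfl⟩ := Finset.mem_image.1 he
          rw [Finset.mem_offDiag] at hab
          intro w hw
          rcases Sym2.mem_iff.1 hw with rfl | rfl
          · exact hab.1
          · exact hab.2.1
      calc ({e : {e : Sym2 V // e ∈ G.edgeSet} | ∀ w ∈ (e : Sym2 V), w ∈ K}).ncard
          = (Subtype.val '' {e : {e : Sym2 V // e ∈ G.edgeSet} | ∀ w ∈ (e : Sym2 V), w ∈ K}).ncard :=
            (Set.ncard_image_of_injective _ Subtype.val_injective).symm
        _ = Nat.choose k 2 := by rw [hval, Set.ncard_coe_finset, hEKcard]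
    have hdisj : Disjoint (gvx '' (↑K : Set V)) (jvx (k := k) '' Ecl) := by
      rw [Set.disjoint_left]
      rintro x ⟨v, _, rfl⟩ ⟨e, _, h⟩
      exact absurd h.symm (by simp)
    have hFcard : (gvx '' ↑K ∪ jvx (k := k) '' Ecl).ncard = k + (Nat.choose k 2 + 1) := by
      rw [Set.ncard_union_eq hdisj (Set.toFinite _) (Set.toFinite _),
        Set.ncard_image_of_injective _ gvx_injective,
        Set.ncard_image_of_injective _ jvx_injective,
        Set.ncard_coe_finset, hKcard, hEclcard]
    have hle := Set.ncard_le_ncard hFsub (Set.toFinite _)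
    rw [hFcard] at hle
    have hct : Nat.choose k 2 = k * (k-1) / 2 := Nat.choose_two_right k
    unfold sav
    omega

/-- For `k ≥ 2` and `|E(G)| > k(k−1)/2`, there is a valid strategy on `(H, s)`
saving at least `k + k(k−1)/2 + 1` vertices iff `G` contains a clique on `k` vertices. -/
theorem saving_iff_clique_stars {V : Type*} [Fintype V] (G : SimpleGraph V)
    (k : ℕ) (hk : 2 ≤ k) (hE : k * (k - 1) / 2 < G.edgeSet.ncard) :
    (∃ S : List (FFVerts' V G k), ValidStrategy (FFGraph' V G k) (Sum.inl ()) S ∧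
      k + k * (k - 1) / 2 + 1 ≤ sav (FFGraph' V G k) (Sum.inl ()) S) ↔
    (∃ K : Finset V, K.card = k ∧ (↑K : Set V).Pairwise G.Adj) := by
  constructor
  · rintro ⟨S, hS, hsav⟩
    by_contra hno
    have h2 : sav (FFGraph' V G k) (Sum.inl ()) S ≤ k + k * (k - 1) / 2 :=
      strategy_to_clique hk S hno
    omega
  · rintro ⟨K, h1, h2⟩
    obtain ⟨S, hS, hsav⟩ := clique_to_strategy hk hE K h1 h2
    exact ⟨S, hS, hsav⟩
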